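/- Let n be a positive integer, Q ∈ ℝ^{n×n} diagonal, σ ∈ (0,1), and ρ > 0. Let X ~ P_Q on {0,1}^n, let X̃ be X afflicted by salt-and-pepper noise of level σ, and let X* be defined by X*_i = 1 if Q_{ii} < −ρ, X*_i = 0 if Q_{ii} > ρ, and X*_i = X̃_i otherwise. Then for every index i with |Q_{ii}| > ρ one has P(X*_i = X_i) > 1/(1 + e^{−ρ}), and for every index i with |Q_{ii}| ≤ ρ one has P(X*_i = X_i) = 1 − σ. -/
import Mathlib

noncomputable section

/-- Real-valued binary vector corresponding to a boolean vector. -/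
def bvec {n : ℕ} (b : Fin n → Bool) : Fin n → ℝ := fun i => if b i then 1 else 0

/-- QUBO energy `f_Q(x) = Σ_{i,j} Q_{ij} x_i x_j`. -/
def quboEnergy {n : ℕ} (Q : Matrix (Fin n) (Fin n) ℝ) (x : Fin n → ℝ) : ℝ :=
  ∑ i, ∑ j, Q i j * x i * x j

/-- Boltzmann distribution on `{0,1}^n` with energy `f_Q`. -/
def boltzmann {n : ℕ} (Q : Matrix (Fin n) (Fin n) ℝ) (x : Fin n → Bool) : ℝ :=
  Real.exp (-quboEnergy Q (bvec x)) /
    ∑ y : Fin n → Bool, Real.exp (-quboEnergy Q (bvec y))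

/-- Probability of the i.i.d. Bernoulli(σ) noise pattern `ε`. -/
def noisePat {n : ℕ} (σ : ℝ) (ε : Fin n → Bool) : ℝ :=
  ∏ i, if ε i then σ else 1 - σ

/-- The denoised image: `X*_i = 1` if `Q_{ii} < -ρ`, `X*_i = 0` if `Q_{ii} > ρ`, and
`X*_i = X̃_i` otherwise, where `X̃ᵢ = Xᵢ XOR εᵢ` is the noisy image. -/
def denoised {n : ℕ} (Q : Matrix (Fin n) (Fin n) ℝ) (ρ : ℝ) (xt : Fin n → Bool) :
    Fin n → Bool :=
  fun i => if Q i i < -ρ then true else if ρ < Q i i then false else xt i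

/-! ### Auxiliary machinery -/

/-- Single-site Gibbs weights for a diagonal `Q`. -/
def gw {n : ℕ} (Q : Matrix (Fin n) (Fin n) ℝ) (j : Fin n) (b : Bool) : ℝ :=
  if b then Real.exp (-(Q j j)) else 1

lemma sum_pi_bool {n : ℕ} (w : Fin n → Bool → ℝ) :
    ∑ x : Fin n → Bool, ∏ j, w j (x j) = ∏ j, (w j false + w j true) := by
  rw [← Fintype.prod_sum]
  congr 1; ext j
  rw [Fintype.sum_bool]; ring

lemma sum_pi_bool_mul {n : ℕ} (w : Fin n → Bool → ℝ) (i : Fin n) (h : Bool → ℝ) :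
    ∑ x : Fin n → Bool, (∏ j, w j (x j)) * h (x i)
      = (w i false * h false + w i true * h true) *
        ∏ j ∈ Finset.univ.erase i, (w j false + w j true) := by
  have key : ∀ x : Fin n → Bool,
      (∏ j, w j (x j)) * h (x i)
        = ∏ j, (w j (x j) * (if j = i then h (x j) else 1)) := by
    intro x
    rw [Finset.prod_mul_distrib]
    congr 1
    simp [Finset.prod_ite_eq']
  calc ∑ x : Fin n → Bool, (∏ j, w j (x j)) * h (x i)
      = ∑ x : Fin n → Bool, ∏ j, (w j (x j) * (if j = i then h (x j) else 1)) :=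
        Finset.sum_congr rfl fun x _ => key x
    _ = ∏ j, ((w j false * (if j = i then h false else 1)) +
          (w j true * (if j = i then h true else 1))) :=
        sum_pi_bool (fun j b => w j b * (if j = i then h b else 1))
    _ = _ := by
        rw [← Finset.prod_erase_mul _ _ (Finset.mem_univ i), mul_comm]
        congr 1
        · simp
        · exact Finset.prod_congr rfl fun j hj => by
            simp [Finset.ne_of_mem_erase hj]

lemma exp_energy_diag {n : ℕ} {Q : Matrix (Fin n) (Fin n) ℝ} (hQ : Q.IsDiag)
    (x : Fin n → Bool) :
    Real.exp (-quboEnergy Q (bvec x)) = ∏ j, gw Q j (x j) := by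
  have he : quboEnergy Q (bvec x) = ∑ j, (if x j then Q j j else 0) := by
    unfold quboEnergy
    refine Finset.sum_congr rfl fun i _ => ?_
    rw [Finset.sum_eq_single i]
    · unfold bvec; cases x i <;> simp
    · intro j _ hj; rw [hQ (Ne.symm hj)]; ring
    · simp
  rw [he, ← Finset.sum_neg_distrib, Real.exp_sum]
  refine Finset.prod_congr rfl fun j _ => ?_
  unfold gw; cases x j <;> simp

lemma gw_pos {n : ℕ} (Q : Matrix (Fin n) (Fin n) ℝ) (j : Fin n) :
    0 < gw Q j false + gw Q j true := by
  unfold gw; simp; positivity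

/-- Marginal of the Boltzmann distribution at site `i` for diagonal `Q`. -/
lemma boltz_marginal {n : ℕ} {Q : Matrix (Fin n) (Fin n) ℝ} (hQ : Q.IsDiag)
    (i : Fin n) (h : Bool → ℝ) :
    ∑ x : Fin n → Bool, boltzmann Q x * h (x i)
      = (gw Q i false * h false + gw Q i true * h true) /
        (gw Q i false + gw Q i true) := by
  have hZ : (∑ y : Fin n → Bool, Real.exp (-quboEnergy Q (bvec y)))
      = ∏ j, (gw Q j false + gw Q j true) := by
    rw [← sum_pi_bool]
    exact Finset.sum_congr rfl fun y _ => exp_energy_diag hQ y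
  have hP : 0 < ∏ j ∈ Finset.univ.erase i, (gw Q j false + gw Q j true) :=
    Finset.prod_pos fun j _ => gw_pos Q j
  calc ∑ x : Fin n → Bool, boltzmann Q x * h (x i)
      = (∑ x : Fin n → Bool, (∏ j, gw Q j (x j)) * h (x i)) /
          ∏ j, (gw Q j false + gw Q j true) := by
        rw [Finset.sum_div]
        refine Finset.sum_congr rfl fun x _ => ?_
        unfold boltzmann
        rw [hZ, exp_energy_diag hQ x, div_mul_eq_mul_div]
    _ = ((gw Q i false * h false + gw Q i true * h true) *
          ∏ j ∈ Finset.univ.erase i, (gw Q j false + gw Q j true)) /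
        ((gw Q i false + gw Q i true) *
          ∏ j ∈ Finset.univ.erase i, (gw Q j false + gw Q j true)) := by
        rw [sum_pi_bool_mul, ← Finset.prod_erase_mul _ _ (Finset.mem_univ i),
          mul_comm (∏ j ∈ Finset.univ.erase i, (gw Q j false + gw Q j true))]
    _ = _ := mul_div_mul_right _ _ (ne_of_gt hP)

lemma noise_fact {n : ℕ} (σ : ℝ) (ε : Fin n → Bool) :
    noisePat σ ε = ∏ j, (fun (b : Bool) => if b then σ else 1 - σ) (ε j) := rfl

lemma sum_noise {n : ℕ} (σ : ℝ) : ∑ ε : Fin n → Bool, noisePat σ ε = 1 := by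
  have h0 : ∑ ε : Fin n → Bool, noisePat σ ε
      = ∑ ε : Fin n → Bool, ∏ j, (fun (b : Bool) => if b then σ else 1 - σ) (ε j) := rfl
  rw [h0, sum_pi_bool (fun (_ : Fin n) (b : Bool) => if b = true then σ else 1 - σ)]
  simp

lemma sum_noise_ind {n : ℕ} (σ : ℝ) (i : Fin n) :
    ∑ ε : Fin n → Bool, noisePat σ ε * (if ε i = false then (1:ℝ) else 0) = 1 - σ := by
  have h0 : ∑ ε : Fin n → Bool, noisePat σ ε * (if ε i = false then (1:ℝ) else 0)
      = ∑ ε : Fin n → Bool, (∏ j, (fun (b : Bool) => if b then σ else 1 - σ) (ε j)) *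
          (fun b => if b = false then (1:ℝ) else 0) (ε i) := rfl
  rw [h0, sum_pi_bool_mul (fun (_ : Fin n) (b : Bool) => if b = true then σ else 1 - σ) i
    (fun b => if b = false then (1:ℝ) else 0)]
  simp

/-- For diagonal `Q`, `X ~ P_Q`, `X̃` the salt-and-pepper noisy image, and
`X*` the coordinatewise-thresholded denoised image, every coordinate `i` with
`|Q_{ii}| > ρ` satisfies `P(X*_i = X_i) > 1/(1+e^{-ρ})`, and every coordinate with
`|Q_{ii}| ≤ ρ` satisfies `P(X*_i = X_i) = 1 - σ`. Probabilities are written as explicit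
sums over the image `x` and the independent noise pattern `ε`. -/
theorem stmt_9 (n : ℕ) (hn : 0 < n) (Q : Matrix (Fin n) (Fin n) ℝ) (hQ : Q.IsDiag)
    (σ : ℝ) (hσ : σ ∈ Set.Ioo (0 : ℝ) 1) (ρ : ℝ) (hρ : 0 < ρ) :
    (∀ i : Fin n, ρ < |Q i i| →
      (∑ x : Fin n → Bool, ∑ ε : Fin n → Bool,
          boltzmann Q x * noisePat σ ε *
            (if denoised Q ρ (fun j => xor (x j) (ε j)) i = x i then (1 : ℝ) else 0))
        > 1 / (1 + Real.exp (-ρ))) ∧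
    (∀ i : Fin n, |Q i i| ≤ ρ →
      (∑ x : Fin n → Bool, ∑ ε : Fin n → Bool,
          boltzmann Q x * noisePat σ ε *
            (if denoised Q ρ (fun j => xor (x j) (ε j)) i = x i then (1 : ℝ) else 0))
        = 1 - σ) := by
  constructor
  · intro i hi
    rcases lt_abs.mp hi with hQi | hQi
    · -- ρ < Q i i : denoised is `false`
      have hd : ∀ xt : Fin n → Bool, denoised Q ρ xt i = false := by
        intro xt; unfold denoised
        rw [if_neg (by linarith), if_pos hQi]
      have step : ∀ x : Fin n → Bool,
          (∑ ε : Fin n → Bool, boltzmann Q x * noisePat σ ε *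
            (if denoised Q ρ (fun j => xor (x j) (ε j)) i = x i then (1 : ℝ) else 0))
          = boltzmann Q x * (if false = x i then (1:ℝ) else 0) := by
        intro x
        have : ∀ ε : Fin n → Bool,
            boltzmann Q x * noisePat σ ε *
              (if denoised Q ρ (fun j => xor (x j) (ε j)) i = x i then (1 : ℝ) else 0)
            = (boltzmann Q x * (if false = x i then (1:ℝ) else 0)) * noisePat σ ε := by
          intro ε; rw [hd]; ring
        rw [Finset.sum_congr rfl fun ε _ => this ε, ← Finset.mul_sum, sum_noise, mul_one]
      rw [Finset.sum_congr rfl fun x _ => step x,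
        boltz_marginal hQ i (fun b => if false = b then (1:ℝ) else 0)]
      unfold gw
      norm_num
      exact inv_strictAnti₀ (by positivity)
        (by have : Real.exp (-Q i i) < Real.exp (-ρ) := Real.exp_lt_exp.mpr (by linarith)
            linarith)
    · -- Q i i < -ρ : denoised is `true`
      replace hQi : Q i i < -ρ := by linarith
      have hd : ∀ xt : Fin n → Bool, denoised Q ρ xt i = true := by
        intro xt; unfold denoised; rw [if_pos hQi]
      have step : ∀ x : Fin n → Bool,
          (∑ ε : Fin n → Bool, boltzmann Q x * noisePat σ ε *
            (if denoised Q ρ (fun j => xor (x j) (ε j)) i = x i then (1 : ℝ) else 0))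
          = boltzmann Q x * (if true = x i then (1:ℝ) else 0) := by
        intro x
        have : ∀ ε : Fin n → Bool,
            boltzmann Q x * noisePat σ ε *
              (if denoised Q ρ (fun j => xor (x j) (ε j)) i = x i then (1 : ℝ) else 0)
            = (boltzmann Q x * (if true = x i then (1:ℝ) else 0)) * noisePat σ ε := by
          intro ε; rw [hd]; ring
        rw [Finset.sum_congr rfl fun ε _ => this ε, ← Finset.mul_sum, sum_noise, mul_one]
      rw [Finset.sum_congr rfl fun x _ => step x,
        boltz_marginal hQ i (fun b => if true = b then (1:ℝ) else 0)]
      unfold gw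
      norm_num
      rw [inv_eq_one_div, div_lt_div_iff₀ (by positivity) (by positivity)]
      have h1 : (1:ℝ) < Real.exp (-Q i i - ρ) := by
        rw [← Real.exp_zero]
        exact Real.exp_lt_exp.mpr (by linarith)
      have h2 : Real.exp (-Q i i - ρ) = Real.exp (-Q i i) * Real.exp (-ρ) := by
        rw [← Real.exp_add]; ring_nf
      nlinarith
  · intro i hi
    obtain ⟨h1, h2⟩ := abs_le.mp hi
    have hd : ∀ xt : Fin n → Bool, denoised Q ρ xt i = xt i := by
      intro xt; unfold denoised
      rw [if_neg (by linarith), if_neg (by linarith)]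
    have step : ∀ x : Fin n → Bool,
        (∑ ε : Fin n → Bool, boltzmann Q x * noisePat σ ε *
          (if denoised Q ρ (fun j => xor (x j) (ε j)) i = x i then (1 : ℝ) else 0))
        = boltzmann Q x * (1 - σ) := by
      intro x
      have key : ∀ ε : Fin n → Bool,
          boltzmann Q x * noisePat σ ε *
            (if denoised Q ρ (fun j => xor (x j) (ε j)) i = x i then (1 : ℝ) else 0)
          = boltzmann Q x * (noisePat σ ε * (if ε i = false then (1:ℝ) else 0)) := by
        intro ε
        rw [hd]
        have : (if xor (x i) (ε i) = x i then (1:ℝ) else 0)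
            = (if ε i = false then (1:ℝ) else 0) := by
          cases hx : x i <;> cases he : ε i <;> simp
        rw [this]; ring
      rw [Finset.sum_congr rfl fun ε _ => key ε, ← Finset.mul_sum, sum_noise_ind]
    rw [Finset.sum_congr rfl fun x _ => step x, ← Finset.sum_mul]
    have : ∑ x : Fin n → Bool, boltzmann Q x = 1 := by
      have := boltz_marginal hQ i (fun _ => (1:ℝ))
      simpa [div_self (ne_of_gt (gw_pos Q i))] using this
    rw [this, one_mul]

end
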